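/- Let K ≥ 2, let m ≥ 1 be an integer, set N = mK, and let α ∈ [0,2]. If σ^A and σ^B are mixed strategies in the Colonel Blotto game B_α(N,K) such that both σ^A and σ^B induce uniform marginals, then the profile (σ^A, σ^B) is a Nash equilibrium, and each player's expected payoff equals K·(2N + αK)/(4N + 2K). -/

import Mathlib

open Finset

/-- The set of pure strategies: allocations of `N` units of the resource
over `K` battlefields. -/
def pureStrats (K N : ℕ) : Finset (Fin K → ℕ) := Finset.Nat.antidiagonalTuple K N

/-- Payoff in the Colonel Blotto game `B_α(N,K)` of playing `s` against `t`:
`π(s,t) = Σ_k [1_{s_k > t_k} + (α/2)·1_{s_k = t_k}]`. -/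
noncomputable def payoff (α : ℝ) {K : ℕ} (s t : Fin K → ℕ) : ℝ :=
  ∑ k, ((if t k < s k then (1 : ℝ) else 0) + α / 2 * (if s k = t k then 1 else 0))

/-- `σ` is a mixed strategy: a probability distribution on the pure strategies. -/
def IsMixed (K N : ℕ) (σ : (Fin K → ℕ) → ℝ) : Prop :=
  (∀ s, 0 ≤ σ s) ∧ (∀ s, s ∉ pureStrats K N → σ s = 0) ∧
    ∑ s ∈ pureStrats K N, σ s = 1

/-- Expected payoff of the mixed strategy `σ` against the mixed strategy `τ`. -/
noncomputable def expPayoff (α : ℝ) (K N : ℕ) (σ τ : (Fin K → ℕ) → ℝ) : ℝ :=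
  ∑ s ∈ pureStrats K N, ∑ t ∈ pureStrats K N, σ s * τ t * payoff α s t

/-- `(σA, σB)` is a mixed-strategy Nash equilibrium: both are mixed strategies and
neither player can strictly improve by a unilateral deviation. -/
def IsNashEq (α : ℝ) (K N : ℕ) (σA σB : (Fin K → ℕ) → ℝ) : Prop :=
  IsMixed K N σA ∧ IsMixed K N σB ∧
    (∀ σ', IsMixed K N σ' → expPayoff α K N σ' σB ≤ expPayoff α K N σA σB) ∧
    (∀ τ', IsMixed K N τ' → expPayoff α K N τ' σA ≤ expPayoff α K N σB σA)

/-- The marginal distribution of `σ` at battlefield `k`, evaluated at `x`. -/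
noncomputable def marginal (K N : ℕ) (σ : (Fin K → ℕ) → ℝ) (k : Fin K) (x : ℕ) : ℝ :=
  ∑ s ∈ (pureStrats K N).filter (fun s => s k = x), σ s

/-- `σ` induces uniform marginals on `{0,1,…,2m}` at every battlefield. -/
def UniformMarginals (K N m : ℕ) (σ : (Fin K → ℕ) → ℝ) : Prop :=
  ∀ k x, marginal K N σ k x = if x ≤ 2 * m then (1 : ℝ) / (2 * m + 1) else 0

lemma mem_pure {K N : ℕ} {s : Fin K → ℕ} (hs : s ∈ pureStrats K N) : ∑ k, s k = N :=
  Finset.Nat.mem_antidiagonalTuple.1 hs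

lemma pure_le {K N : ℕ} {s : Fin K → ℕ} (hs : s ∈ pureStrats K N) (k : Fin K) : s k ≤ N := by
  rw [← mem_pure hs]
  exact Finset.single_le_sum (fun i _ => Nat.zero_le _) (mem_univ k)

noncomputable def fB (α : ℝ) (m x : ℕ) : ℝ :=
  ((min x (2*m+1) : ℕ) + α/2 * (if x ≤ 2*m then 1 else 0)) / (2*m+1)

lemma sum_lt_ind (x n : ℕ) : ∑ y ∈ Finset.range n, (if y < x then (1:ℝ) else 0) = ((min x n : ℕ) : ℝ) := by
  induction n with
  | zero => simp
  | succ n ih =>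
    rw [Finset.sum_range_succ, ih]
    by_cases h : n < x
    · have h1 : min x (n+1) = n+1 := by omega
      have h2 : min x n = n := by omega
      simp [h, h1, h2]
    · have h1 : min x (n+1) = x := by omega
      have h2 : min x n = x := by omega
      simp [h, h1, h2]

lemma sum_against_uniform (α : ℝ) (K N m : ℕ) (h2m : 2*m ≤ N)
    (τ : (Fin K → ℕ) → ℝ) (hτu : UniformMarginals K N m τ) (s : Fin K → ℕ) :
    ∑ t ∈ pureStrats K N, τ t * payoff α s t = ∑ k, fB α m (s k) := by
  unfold payoff
  simp_rw [Finset.mul_sum]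
  rw [Finset.sum_comm]
  refine Finset.sum_congr rfl fun k _ => ?_
  have hmaps : ∀ t ∈ pureStrats K N, t k ∈ Finset.range (N+1) :=
    fun t ht => Finset.mem_range.2 (Nat.lt_succ_of_le (pure_le ht k))
  rw [← Finset.sum_fiberwise_of_maps_to hmaps
    (fun t => τ t * ((if t k < s k then (1:ℝ) else 0) + α/2 * (if s k = t k then 1 else 0)))]
  have step1 : ∀ y ∈ Finset.range (N+1),
      ∑ t ∈ (pureStrats K N).filter (fun t => t k = y),
        τ t * ((if t k < s k then (1:ℝ) else 0) + α/2 * (if s k = t k then 1 else 0))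
      = marginal K N τ k y * ((if y < s k then (1:ℝ) else 0) + α/2 * (if s k = y then 1 else 0)) := by
    intro y _
    rw [marginal, Finset.sum_mul]
    refine Finset.sum_congr rfl fun t ht => ?_
    rw [(Finset.mem_filter.1 ht).2]
  rw [Finset.sum_congr rfl step1]
  simp_rw [hτu k]
  have hsub : Finset.range (2*m+1) ⊆ Finset.range (N+1) := Finset.range_subset_range.2 (by omega)
  rw [← Finset.sum_subset hsub (by
    intro y hy hy'
    have : ¬ y ≤ 2*m := by
      simp only [Finset.mem_range] at hy'; omega
    simp [this])]
  have step2 : ∀ y ∈ Finset.range (2*m+1),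
      (if y ≤ 2*m then (1:ℝ)/(2*m+1) else 0) * ((if y < s k then (1:ℝ) else 0) + α/2 * (if s k = y then 1 else 0))
      = (1/(2*m+1)) * ((if y < s k then (1:ℝ) else 0) + α/2 * (if s k = y then 1 else 0)) := by
    intro y hy
    have : y ≤ 2*m := by simpa [Nat.lt_succ_iff] using Finset.mem_range.1 hy
    simp [this]
  rw [Finset.sum_congr rfl step2, ← Finset.mul_sum]
  rw [Finset.sum_add_distrib, ← Finset.mul_sum, sum_lt_ind]
  rw [Finset.sum_ite_eq (Finset.range (2*m+1)) (s k) (fun _ => (1:ℝ))]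
  simp only [Finset.mem_range, Nat.lt_succ_iff]
  rw [fB]
  push_cast
  ring

lemma fB_le (α : ℝ) (hα : 0 ≤ α) (m x : ℕ) : fB α m x ≤ ((x:ℝ) + α/2)/(2*m+1) := by
  unfold fB
  have hd : (0:ℝ) < 2*(m:ℝ)+1 := by positivity
  have hnum : ((min x (2*m+1) : ℕ):ℝ) + α/2 * (if x ≤ 2*m then 1 else 0) ≤ (x:ℝ) + α/2 := by
    by_cases h : x ≤ 2*m
    · have h1 : min x (2*m+1) = x := by omega
      simp [h, h1]
    · have h1 : min x (2*m+1) = 2*m+1 := by omega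
      have h2 : (2*m+1 : ℕ) ≤ x := by omega
      have h2' : ((2*m+1 : ℕ):ℝ) ≤ (x:ℝ) := Nat.cast_le.2 h2
      rw [h1, if_neg h]
      push_cast at h2' ⊢
      linarith
  exact (div_le_div_iff_of_pos_right hd).2 hnum

lemma fB_eq (α : ℝ) (m x : ℕ) (hx : x ≤ 2*m) : fB α m x = ((x:ℝ) + α/2)/(2*m+1) := by
  unfold fB
  have h1 : min x (2*m+1) = x := by omega
  simp [h1, hx]

lemma expPayoff_eq_sum (α : ℝ) (K N : ℕ) (σ τ : (Fin K → ℕ) → ℝ) :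
    expPayoff α K N σ τ = ∑ s ∈ pureStrats K N, σ s * ∑ t ∈ pureStrats K N, τ t * payoff α s t := by
  unfold expPayoff
  refine Finset.sum_congr rfl fun s _ => ?_
  rw [Finset.mul_sum]
  exact Finset.sum_congr rfl fun t _ => by ring

lemma sum_fB_eq (α : ℝ) (K N m : ℕ) {s : Fin K → ℕ} (hs : s ∈ pureStrats K N)
    (hb : ∀ k, s k ≤ 2*m) : ∑ k, fB α m (s k) = ((N:ℝ) + K*(α/2))/(2*m+1) := by
  have hsum : ∑ k, ((s k : ℝ)) = (N:ℝ) := by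
    rw [← Nat.cast_sum, mem_pure hs]
  calc ∑ k, fB α m (s k) = ∑ k : Fin K, ((s k : ℝ) + α/2)/(2*m+1) :=
        Finset.sum_congr rfl fun k _ => fB_eq α m (s k) (hb k)
    _ = ((N:ℝ) + K*(α/2))/(2*m+1) := by
        rw [← Finset.sum_div, Finset.sum_add_distrib, hsum, Finset.sum_const, card_univ,
          Fintype.card_fin, nsmul_eq_mul]

lemma value_le (α : ℝ) (hα : 0 ≤ α) (K N m : ℕ) (h2m : 2*m ≤ N)
    (σ τ : (Fin K → ℕ) → ℝ) (hσ : IsMixed K N σ) (hτu : UniformMarginals K N m τ) :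
    expPayoff α K N σ τ ≤ ((N:ℝ) + K*(α/2))/(2*m+1) := by
  rw [expPayoff_eq_sum]
  have hb : ∀ s ∈ pureStrats K N,
      σ s * ∑ t ∈ pureStrats K N, τ t * payoff α s t ≤ σ s * (((N:ℝ) + K*(α/2))/(2*m+1)) := by
    intro s hs
    rw [sum_against_uniform α K N m h2m τ hτu s]
    refine mul_le_mul_of_nonneg_left ?_ (hσ.1 s)
    have hsum : ∑ k, ((s k : ℝ)) = (N:ℝ) := by
      rw [← Nat.cast_sum, mem_pure hs]
    calc ∑ k, fB α m (s k) ≤ ∑ k : Fin K, ((s k : ℝ) + α/2)/(2*m+1) :=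
          Finset.sum_le_sum fun k _ => fB_le α hα m (s k)
      _ = ((N:ℝ) + K*(α/2))/(2*m+1) := by
          rw [← Finset.sum_div, Finset.sum_add_distrib, hsum, Finset.sum_const, card_univ,
            Fintype.card_fin, nsmul_eq_mul]
  calc ∑ s ∈ pureStrats K N, σ s * ∑ t ∈ pureStrats K N, τ t * payoff α s t
      ≤ ∑ s ∈ pureStrats K N, σ s * (((N:ℝ) + K*(α/2))/(2*m+1)) := Finset.sum_le_sum hb
    _ = ((N:ℝ) + K*(α/2))/(2*m+1) := by rw [← Finset.sum_mul, hσ.2.2, one_mul]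

lemma support_le (K N m : ℕ) (σ : (Fin K → ℕ) → ℝ) (hσ : IsMixed K N σ)
    (hu : UniformMarginals K N m σ) {s : Fin K → ℕ} (hs : s ∈ pureStrats K N)
    (k : Fin K) (h : 2*m < s k) : σ s = 0 := by
  have h0 : marginal K N σ k (s k) = 0 := by
    rw [hu]; simp [Nat.not_le.2 h]
  have h1 : σ s ≤ marginal K N σ k (s k) :=
    Finset.single_le_sum (fun t _ => hσ.1 t) (Finset.mem_filter.2 ⟨hs, rfl⟩)
  linarith [hσ.1 s]

lemma value_eq (α : ℝ) (K N m : ℕ) (h2m : 2*m ≤ N)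
    (σ τ : (Fin K → ℕ) → ℝ) (hσ : IsMixed K N σ) (hσu : UniformMarginals K N m σ)
    (hτu : UniformMarginals K N m τ) :
    expPayoff α K N σ τ = ((N:ℝ) + K*(α/2))/(2*m+1) := by
  rw [expPayoff_eq_sum]
  have hb : ∀ s ∈ pureStrats K N,
      σ s * ∑ t ∈ pureStrats K N, τ t * payoff α s t = σ s * (((N:ℝ) + K*(α/2))/(2*m+1)) := by
    intro s hs
    by_cases h0 : σ s = 0
    · simp [h0]
    · have hbnd : ∀ k, s k ≤ 2*m := by
        intro k
        by_contra h
        exact h0 (support_le K N m σ hσ hσu hs k (Nat.not_le.1 h))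
      rw [sum_against_uniform α K N m h2m τ hτu s, sum_fB_eq α K N m hs hbnd]
  rw [Finset.sum_congr rfl hb, ← Finset.sum_mul, hσ.2.2, one_mul]

theorem stmt0 (K m N : ℕ) (hK : 2 ≤ K) (hm : 1 ≤ m) (hN : N = m * K)
    (α : ℝ) (hα : α ∈ Set.Icc (0 : ℝ) 2)
    (σA σB : (Fin K → ℕ) → ℝ) (hA : IsMixed K N σA) (hB : IsMixed K N σB)
    (hAu : UniformMarginals K N m σA) (hBu : UniformMarginals K N m σB) :
    IsNashEq α K N σA σB ∧
    expPayoff α K N σA σB = (K : ℝ) * (2 * (N : ℝ) + α * K) / (4 * (N : ℝ) + 2 * K) ∧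
    expPayoff α K N σB σA = (K : ℝ) * (2 * (N : ℝ) + α * K) / (4 * (N : ℝ) + 2 * K) := by
  obtain ⟨hα0, hα2⟩ := hα
  have h2m : 2*m ≤ N := by
    have : m*2 ≤ m*K := Nat.mul_le_mul_left m hK
    omega
  have hVal : ((N:ℝ) + K*(α/2))/(2*(m:ℝ)+1) = (K:ℝ)*(2*(N:ℝ)+α*K)/(4*(N:ℝ)+2*K) := by
    have hNr : (N:ℝ) = (m:ℝ)*K := by rw [hN]; push_cast; ring
    have hK0 : (0:ℝ) < K := by
      have : (2:ℝ) ≤ K := by exact_mod_cast hK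
      linarith
    have hm0 : (0:ℝ) < 2*(m:ℝ)+1 := by positivity
    rw [hNr]
    have hd : (4*((m:ℝ)*K)+2*K) = 2*K*(2*(m:ℝ)+1) := by ring
    rw [hd]
    field_simp
  have hAB : expPayoff α K N σA σB = ((N:ℝ) + K*(α/2))/(2*(m:ℝ)+1) :=
    value_eq α K N m h2m σA σB hA hAu hBu
  have hBA : expPayoff α K N σB σA = ((N:ℝ) + K*(α/2))/(2*(m:ℝ)+1) :=
    value_eq α K N m h2m σB σA hB hBu hAu
  refine ⟨⟨hA, hB, ?_, ?_⟩, ?_, ?_⟩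
  · intro σ' hσ'
    rw [hAB]
    exact value_le α hα0 K N m h2m σ' σB hσ' hBu
  · intro τ' hτ'
    rw [hBA]
    exact value_le α hα0 K N m h2m τ' σA hτ' hAu
  · rw [hAB, hVal]
  · rw [hBA, hVal]
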